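/- arXiv:2001.04436 — 2 statements merged into one kernel-verified Lean document; each statement's English description precedes it below -/
import Mathlib

section
/- Let F ⊆ K be fields, let r < k be positive integers, and let α_1, …, α_{k−2} ∈ K satisfy α_i ∉ F(α_1, …, α_{i−1}) for every i. Let A = (a_{ij}) ∈ K^{(k−r)×r} satisfy a_{11} = 1 and, for all (i,j) ≠ (1,1), a_{ij} ∈ F(α_1, …, α_{i+j−2}) \ F(α_1, …, α_{i+j−3}). Then for every pair of subsets S ⊆ {1, …, k−r} and T ⊆ {1, …, r} with |S| + |T| = r, the |S|×|S| submatrix A(S, T^c) of A consisting of the rows indexed by S and the columns indexed by T^c = {1, …, r} \ T has nonzero determinant. -/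
section Aux

variable {F K : Type*} [Field F] [Field K] [Algebra F K]

private lemma det_mem_adjoin' {n : ℕ} (E : IntermediateField F K)
    (M : Matrix (Fin n) (Fin n) K) (h : ∀ i j, M i j ∈ E) : M.det ∈ E := by
  rw [Matrix.det_apply']
  refine sum_mem fun σ _ => mul_mem ?_ (prod_mem fun i _ => h _ _)
  exact_mod_cast IntermediateField.intCast_mem E ((Equiv.Perm.sign σ : ℤ))

private lemma aux_main {p q : ℕ} (α : ℕ → K) (A : Matrix (Fin p) (Fin q) K)
    (hA11 : ∀ (i : Fin p) (j : Fin q), ((i : ℕ), (j : ℕ)) = (0, 0) → A i j = 1)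
    (hA : ∀ (i : Fin p) (j : Fin q), ((i : ℕ), (j : ℕ)) ≠ (0, 0) →
      A i j ∈ (IntermediateField.adjoin F (α '' Set.Icc 1 ((i : ℕ) + (j : ℕ))) : Set K) \
        (IntermediateField.adjoin F (α '' Set.Icc 1 ((i : ℕ) + (j : ℕ) - 1)) : Set K)) :
    ∀ (m : ℕ) (s : Fin (m + 1) → Fin p) (u : Fin (m + 1) → Fin q),
      StrictMono s → StrictMono u →
      (Matrix.of fun i j => A (s i) (u j)).det ∈
        IntermediateField.adjoin F
          (α '' Set.Icc 1 ((s (Fin.last m) : ℕ) + (u (Fin.last m) : ℕ))) ∧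
      (Matrix.of fun i j => A (s i) (u j)).det ≠ 0 := by
  -- entries lie in the field of their level
  have entry_mem : ∀ (i : Fin p) (j : Fin q) (N : ℕ), (i : ℕ) + (j : ℕ) ≤ N →
      A i j ∈ IntermediateField.adjoin F (α '' Set.Icc 1 N) := by
    intro i j N hN
    by_cases h : ((i : ℕ), (j : ℕ)) = (0, 0)
    · rw [hA11 i j h]; exact one_mem _
    · exact IntermediateField.adjoin.mono F _ _
        (Set.image_mono (Set.Icc_subset_Icc_right hN)) (hA i j h).1
  intro m
  induction m with
  | zero =>
    intro s u hs hu
    have hdet : (Matrix.of fun i j => A (s i) (u j)).det = A (s 0) (u 0) := by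
      simp [Matrix.det_unique]
    rw [hdet]
    by_cases h : ((s 0 : ℕ), (u 0 : ℕ)) = (0, 0)
    · constructor
      · exact entry_mem _ _ _ le_rfl
      · rw [hA11 _ _ h]; exact one_ne_zero
    · refine ⟨entry_mem _ _ _ le_rfl, fun h0 => (hA _ _ h).2 ?_⟩
      rw [h0]; exact zero_mem _
  | succ m ih =>
    intro s u hs hu
    set N : ℕ := (s (Fin.last (m + 1)) : ℕ) + (u (Fin.last (m + 1)) : ℕ) with hN
    have hsge : 1 ≤ (s (Fin.last (m + 1)) : ℕ) := by
      have := hs (show (0 : Fin (m + 2)) < Fin.last (m + 1) by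
        simp [Fin.pos_iff_ne_zero, Fin.lt_iff_val_lt_val])
      omega
    have hNpos : 1 ≤ N := le_trans hsge (Nat.le_add_right _ _)
    -- the expansion along the last row
    have hexp := Matrix.det_succ_row (Matrix.of fun i j => A (s i) (u j)) (Fin.last (m + 1))
    rw [Fin.sum_univ_castSucc] at hexp
    -- the IH applied to the top-left minor
    have hIH := ih (s ∘ Fin.castSucc) (u ∘ Fin.castSucc)
      (hs.comp Fin.strictMono_castSucc) (hu.comp Fin.strictMono_castSucc)
    simp only [Function.comp_apply] at hIH
    set C := (Matrix.of fun i j => A (s (Fin.castSucc i)) (u (Fin.castSucc j))).det with hC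
    have hCmem : C ∈ IntermediateField.adjoin F (α '' Set.Icc 1 (N - 1)) := by
      refine IntermediateField.adjoin.mono F _ _
        (Set.image_mono (Set.Icc_subset_Icc_right ?_)) hIH.1
      have h1 : (s (Fin.castSucc (Fin.last m)) : ℕ) < (s (Fin.last (m + 1)) : ℕ) :=
        hs (Fin.castSucc_lt_last _)
      have h2 : (u (Fin.castSucc (Fin.last m)) : ℕ) ≤ (u (Fin.last (m + 1)) : ℕ) :=
        (hu.le_iff_le.mpr (Fin.castSucc_lt_last _).le)
      omega
    have hCne : C ≠ 0 := hIH.2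
    -- the entry in the bottom-right corner is outside F_{N-1}
    have ha : A (s (Fin.last (m + 1))) (u (Fin.last (m + 1))) ∉
        IntermediateField.adjoin F (α '' Set.Icc 1 (N - 1)) := by
      have hne : ((s (Fin.last (m + 1)) : ℕ), (u (Fin.last (m + 1)) : ℕ)) ≠ (0, 0) := by
        intro hcon
        have := congrArg Prod.fst hcon
        simp at this
        omega
      exact (hA _ _ hne).2
    -- the rest of the expansion lies in F_{N-1}
    have hrest : (∑ j : Fin (m + 1),
        (-1 : K) ^ ((Fin.last (m + 1) : ℕ) + ((Fin.castSucc j : Fin (m+2)) : ℕ)) *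
          (Matrix.of fun i j => A (s i) (u j)) (Fin.last (m + 1)) (Fin.castSucc j) *
          (((Matrix.of fun i j => A (s i) (u j)).submatrix
            (Fin.last (m + 1)).succAbove (Fin.castSucc j).succAbove).det)) ∈
        IntermediateField.adjoin F (α '' Set.Icc 1 (N - 1)) := by
      refine sum_mem fun j _ => ?_
      refine mul_mem (mul_mem ?_ ?_) ?_
      · exact pow_mem (neg_mem (one_mem _)) _
      · simp only [Matrix.of_apply]
        refine entry_mem _ _ _ ?_
        have : (u (Fin.castSucc j) : ℕ) < (u (Fin.last (m + 1)) : ℕ) :=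
          hu (Fin.castSucc_lt_last _)
        omega
      · refine det_mem_adjoin' _ _ fun i' j' => ?_
        simp only [Matrix.submatrix_apply, Matrix.of_apply]
        refine entry_mem _ _ _ ?_
        have h1 : ((Fin.last (m + 1)).succAbove i' : Fin (m + 2)) < Fin.last (m + 1) := by
          rw [Fin.succAbove_last]
          exact Fin.castSucc_lt_last _
        have h2 : (s ((Fin.last (m + 1)).succAbove i') : ℕ) < (s (Fin.last (m + 1)) : ℕ) :=
          hs h1
        have h3 : (u ((Fin.castSucc j).succAbove j') : ℕ) ≤ (u (Fin.last (m + 1)) : ℕ) :=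
          hu.le_iff_le.mpr (Fin.le_last _)
        omega
    -- the last term of the expansion
    have hlast : ((-1 : K) ^ ((Fin.last (m + 1) : ℕ) + ((Fin.last (m + 1) : Fin (m+2)) : ℕ)) *
        (Matrix.of fun i j => A (s i) (u j)) (Fin.last (m + 1)) (Fin.last (m + 1)) *
        (((Matrix.of fun i j => A (s i) (u j)).submatrix
          (Fin.last (m + 1)).succAbove (Fin.last (m + 1)).succAbove).det)) =
        A (s (Fin.last (m + 1))) (u (Fin.last (m + 1))) * C := by
      rw [Fin.succAbove_last]
      have : ((-1 : K)) ^ ((Fin.last (m + 1) : ℕ) + (Fin.last (m + 1) : ℕ)) = 1 := by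
        rw [← two_mul, pow_mul]; norm_num
      rw [this, one_mul]
      rfl
    rw [hlast] at hexp
    have hdetnot : (Matrix.of fun i j => A (s i) (u j)).det ∉
        IntermediateField.adjoin F (α '' Set.Icc 1 (N - 1)) := by
      intro hdet
      apply ha
      have hac : A (s (Fin.last (m + 1))) (u (Fin.last (m + 1))) * C ∈
          IntermediateField.adjoin F (α '' Set.Icc 1 (N - 1)) := by
        have : A (s (Fin.last (m + 1))) (u (Fin.last (m + 1))) * C =
            (Matrix.of fun i j => A (s i) (u j)).det - ∑ j : Fin (m + 1),
            (-1 : K) ^ ((Fin.last (m + 1) : ℕ) + ((Fin.castSucc j : Fin (m+2)) : ℕ)) *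
              (Matrix.of fun i j => A (s i) (u j)) (Fin.last (m + 1)) (Fin.castSucc j) *
              (((Matrix.of fun i j => A (s i) (u j)).submatrix
                (Fin.last (m + 1)).succAbove (Fin.castSucc j).succAbove).det) := by
          rw [hexp]; ring
        rw [this]
        exact sub_mem hdet hrest
      have : A (s (Fin.last (m + 1))) (u (Fin.last (m + 1))) =
          (A (s (Fin.last (m + 1))) (u (Fin.last (m + 1))) * C) * C⁻¹ := by
        field_simp
      rw [this]
      exact mul_mem hac (inv_mem hCmem)
    refine ⟨?_, fun h0 => hdetnot (h0 ▸ zero_mem _)⟩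
    exact det_mem_adjoin' _ _ fun i j => by
      simp only [Matrix.of_apply]
      refine entry_mem _ _ _ ?_
      have h1 : (s i : ℕ) ≤ (s (Fin.last (m + 1)) : ℕ) := hs.le_iff_le.mpr (Fin.le_last _)
      have h2 : (u j : ℕ) ≤ (u (Fin.last (m + 1)) : ℕ) := hu.le_iff_le.mpr (Fin.le_last _)
      omega

private lemma aux_ne_zero {p q : ℕ} (α : ℕ → K) (A : Matrix (Fin p) (Fin q) K)
    (hA11 : ∀ (i : Fin p) (j : Fin q), ((i : ℕ), (j : ℕ)) = (0, 0) → A i j = 1)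
    (hA : ∀ (i : Fin p) (j : Fin q), ((i : ℕ), (j : ℕ)) ≠ (0, 0) →
      A i j ∈ (IntermediateField.adjoin F (α '' Set.Icc 1 ((i : ℕ) + (j : ℕ))) : Set K) \
        (IntermediateField.adjoin F (α '' Set.Icc 1 ((i : ℕ) + (j : ℕ) - 1)) : Set K)) :
    ∀ (n : ℕ) (s : Fin n → Fin p) (u : Fin n → Fin q),
      StrictMono s → StrictMono u →
      (Matrix.of fun i j => A (s i) (u j)).det ≠ 0 := by
  intro n
  match n with
  | 0 => intro s u _ _; rw [Matrix.det_isEmpty]; exact one_ne_zero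
  | m + 1 => intro s u hs hu; exact (aux_main α A hA11 hA m s u hs hu).2

end Aux

/-- Under the hypotheses of Proposition 3 of the paper, for all subsets
`S` of rows and `T` of columns of `A ∈ K^{(k-r)×r}` with `|S| + |T| = r`, the square
submatrix `A(S, Tᶜ)` (rows indexed by `S`, columns by the complement of `T`, both taken
in increasing order) has nonzero determinant.  The hypothesis `hcc : Tᶜ.card = S.card`
is automatic from `|S| + |T| = r`. -/
theorem stmt_3 {F K : Type*} [Field F] [Field K] [Algebra F K]
    (k r : ℕ) (hr : 0 < r) (hrk : r < k)
    (α : ℕ → K)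
    (hα : ∀ i, 1 ≤ i → i ≤ k - 2 →
      α i ∉ IntermediateField.adjoin F (α '' Set.Icc 1 (i - 1)))
    (A : Matrix (Fin (k - r)) (Fin r) K)
    (hA11 : ∀ (i : Fin (k - r)) (j : Fin r), ((i : ℕ), (j : ℕ)) = (0, 0) → A i j = 1)
    (hA : ∀ (i : Fin (k - r)) (j : Fin r), ((i : ℕ), (j : ℕ)) ≠ (0, 0) →
      A i j ∈ (IntermediateField.adjoin F (α '' Set.Icc 1 ((i : ℕ) + (j : ℕ))) : Set K) \
        (IntermediateField.adjoin F (α '' Set.Icc 1 ((i : ℕ) + (j : ℕ) - 1)) : Set K))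
    (S : Finset (Fin (k - r))) (T : Finset (Fin r))
    (hST : S.card + T.card = r) (hcc : Tᶜ.card = S.card) :
    (Matrix.of fun i j : Fin S.card =>
        A ((S.orderIsoOfFin rfl) i) ((Tᶜ.orderIsoOfFin hcc) j)).det ≠ 0 := by
  refine aux_ne_zero α A hA11 hA S.card
    (fun i => ((S.orderIsoOfFin rfl) i : Fin (k - r)))
    (fun j => ((Tᶜ.orderIsoOfFin hcc) j : Fin r)) ?_ ?_
  · intro a b hab
    exact_mod_cast (S.orderIsoOfFin rfl).strictMono hab
  · intro a b hab
    exact_mod_cast (Tᶜ.orderIsoOfFin hcc).strictMono hab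
end

section
/- Let V be a self-orthogonal d-dimensional F_q-subspace of F_q^{2n}, and let c : V → ℂ with c(0) = 1 be such that W(v) := c(v)·W̃(v) satisfies W(v) W(v') = W(v + v') for all v, v' ∈ V. Then there exists a unique family of q^n × q^n complex matrices (P_{[w]}), indexed by the cosets [w] = w + V^{⊥J} of the quotient F_q^{2n}/V^{⊥J}, such that: each P_{[w]} is an orthogonal projection (Hermitian and idempotent); P_{[w]} P_{[w']} = 0 whenever [w] ≠ [w']; ∑_{[w] ∈ F_q^{2n}/V^{⊥J}} P_{[w]} = I; and for every v ∈ V, W(v) = ∑_{[w] ∈ F_q^{2n}/V^{⊥J}} ω^{⟨v, Jw⟩} P_{[w]} (the exponent ⟨v, Jw⟩ depends only on the coset [w]). -/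
/-- `ω = exp(2πi/p)`, a primitive `p`-th root of unity. -/
noncomputable def omg (p : ℕ) : ℂ := Complex.exp (2 * (Real.pi : ℂ) * Complex.I / (p : ℂ))

/-- The `F_p`-valued pairing `⟨x, y⟩ = tr(∑ s, x s * y s)` on `F_q^n`, where
`tr : F_q → F_p` is the field trace. -/
noncomputable def ip (p : ℕ) {K : Type*} [Field K] [Fintype K] [Algebra (ZMod p) K]
    {n : ℕ} (x y : Fin n → K) : ZMod p :=
  Algebra.trace (ZMod p) K (∑ s, x s * y s)

/-- The Weyl operator `W̃(a,b)`: the `q^n × q^n` complex matrix, with rows and columns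
indexed by `F_q^n`, whose `(j,k)` entry is `ω^{⟨b,k⟩}` if `j = k + a` and `0`
otherwise. -/
noncomputable def Wt (p : ℕ) {K : Type*} [Field K] [Fintype K] [DecidableEq K]
    [Algebra (ZMod p) K] {n : ℕ} (a b : Fin n → K) :
    Matrix (Fin n → K) (Fin n → K) ℂ :=
  Matrix.of fun j k => if j = k + a then omg p ^ (ip p b k).val else 0

/-- The Weyl operator `W̃(v)` of a vector `v = (a,b) ∈ F_q^{2n} = F_q^n × F_q^n`. -/
noncomputable def Wtv (p : ℕ) {K : Type*} [Field K] [Fintype K] [DecidableEq K]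
    [Algebra (ZMod p) K] {n : ℕ} (v : (Fin n → K) × (Fin n → K)) :
    Matrix (Fin n → K) (Fin n → K) ℂ :=
  Wt p v.1 v.2

/-- The symplectic pairing `⟨v, Jw⟩ = ⟨v.2, w.1⟩ − ⟨v.1, w.2⟩ ∈ F_p` on
`F_q^{2n} = F_q^n × F_q^n`, where `J = [[0, −I_n],[I_n, 0]]`. -/
noncomputable def symp (p : ℕ) {K : Type*} [Field K] [Fintype K] [Algebra (ZMod p) K]
    {n : ℕ} (v w : (Fin n → K) × (Fin n → K)) : ZMod p :=
  ip p v.2 w.1 - ip p v.1 w.2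

lemma ip_add_right (p : ℕ) {K : Type*} [Field K] [Fintype K] [Algebra (ZMod p) K]
    {n : ℕ} (x y y' : Fin n → K) : ip p x (y + y') = ip p x y + ip p x y' := by
  unfold ip
  rw [← map_add]
  congr 1
  simp [mul_add, Finset.sum_add_distrib]

lemma ip_neg_right (p : ℕ) {K : Type*} [Field K] [Fintype K] [Algebra (ZMod p) K]
    {n : ℕ} (x y : Fin n → K) : ip p x (-y) = - ip p x y := by
  unfold ip
  rw [← map_neg]
  congr 1
  simp [mul_neg]

lemma ip_zero_right (p : ℕ) {K : Type*} [Field K] [Fintype K] [Algebra (ZMod p) K]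
    {n : ℕ} (x : Fin n → K) : ip p x 0 = 0 := by
  simp [ip]

/-- `V^{⊥J} = {w ∈ F_q^{2n} : ⟨v, Jw⟩ = 0 for all v ∈ V}`, as an additive subgroup of
`F_q^{2n}` (so that one can form the quotient `F_q^{2n} / V^{⊥J}`). -/
def sympPerp (p : ℕ) {K : Type*} [Field K] [Fintype K] [Algebra (ZMod p) K]
    {n : ℕ} (V : Submodule K ((Fin n → K) × (Fin n → K))) :
    AddSubgroup ((Fin n → K) × (Fin n → K)) where
  carrier := {w | ∀ v ∈ V, symp p v w = 0}
  zero_mem' := by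
    intro v _
    simp [symp, ip_zero_right]
  add_mem' := by
    intro w w' hw hw' v hv
    have h : symp p v (w + w') = symp p v w + symp p v w' := by
      simp only [symp, Prod.fst_add, Prod.snd_add, ip_add_right]
      ring
    rw [h, hw v hv, hw' v hv, add_zero]
  neg_mem' := by
    intro w hw v hv
    have h : symp p v (-w) = - symp p v w := by
      simp only [symp, Prod.fst_neg, Prod.snd_neg, ip_neg_right]
      ring
    rw [h, hw v hv, neg_zero]

/-! ### Auxiliary lemmas -/

noncomputable def chi (p : ℕ) (s : ZMod p) : ℂ := omg p ^ s.val

section chiLemmas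
variable (p : ℕ) [Fact p.Prime]

lemma chi_eq (s : ZMod p) : omg p ^ s.val = chi p s := rfl

lemma omg_prim : IsPrimitiveRoot (omg p) p :=
  Complex.isPrimitiveRoot_exp p (Fact.out : p.Prime).ne_zero

lemma chi_zero : chi p 0 = 1 := by
  haveI : NeZero p := ⟨(Fact.out : p.Prime).ne_zero⟩
  simp [chi, ZMod.val_zero]

lemma chi_add (s t : ZMod p) : chi p (s + t) = chi p s * chi p t := by
  haveI : NeZero p := ⟨(Fact.out : p.Prime).ne_zero⟩
  rw [chi, chi, chi, ZMod.val_add, ← pow_add,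
    ← pow_eq_pow_mod _ ((omg_prim p).pow_eq_one)]

lemma chi_mul_neg (s : ZMod p) : chi p s * chi p (-s) = 1 := by
  rw [← chi_add, add_neg_cancel, chi_zero]

lemma chi_ne_zero (s : ZMod p) : chi p s ≠ 0 :=
  fun h => by simpa [h] using chi_mul_neg p s

lemma chi_eq_one_iff (s : ZMod p) : chi p s = 1 ↔ s = 0 := by
  haveI : NeZero p := ⟨(Fact.out : p.Prime).ne_zero⟩
  constructor
  · intro h
    by_contra hs
    exact (omg_prim p).pow_ne_one_of_pos_of_lt
      (Nat.pos_of_ne_zero (fun h0 => hs ((ZMod.val_eq_zero s).mp h0))).ne'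
      (ZMod.val_lt s) h
  · intro h; rw [h, chi_zero]

lemma conj_chi (s : ZMod p) : (starRingEnd ℂ) (chi p s) = chi p (-s) := by
  have habs : ‖omg p‖ = 1 := by
    have : omg p = Complex.exp ((2 * Real.pi / p : ℝ) * Complex.I) := by
      rw [omg]; push_cast; ring_nf
    rw [this, Complex.norm_exp_ofReal_mul_I]
  have h1 : chi p s * (starRingEnd ℂ) (chi p s) = 1 := by
    rw [mul_comm, Complex.conj_mul']
    norm_cast
    rw [chi, norm_pow, habs, one_pow, one_pow]
  exact mul_left_cancel₀ (chi_ne_zero p s) (h1.trans (chi_mul_neg p s).symm)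

lemma star_chi (s : ZMod p) : star (chi p s) = chi p (-s) := by
  rw [Complex.star_def, conj_chi]

lemma char_sum {A : Type*} [AddCommGroup A] [Fintype A] (ψ : A →+ ZMod p) :
    ∑ a, chi p (ψ a) = if ∀ a, ψ a = 0 then (Fintype.card A : ℂ) else 0 := by
  split_ifs with h
  · simp [fun a => h a, chi_zero, Finset.card_univ]
  · push_neg at h
    obtain ⟨a₀, ha₀⟩ := h
    have key : chi p (ψ a₀) * ∑ a, chi p (ψ a) = ∑ a, chi p (ψ a) := by
      rw [Finset.mul_sum]
      refine Fintype.sum_equiv (Equiv.addLeft a₀) _ _ (fun a => ?_)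
      rw [← chi_add, ← map_add]
      rfl
    have h0 : (chi p (ψ a₀) - 1) * ∑ a, chi p (ψ a) = 0 := by linear_combination key
    rcases mul_eq_zero.mp h0 with h' | h'
    · exact absurd ((chi_eq_one_iff p _).mp (sub_eq_zero.mp h')) ha₀
    · exact h'
end chiLemmas

section ipLemmas
variable (p : ℕ) {K : Type*} [Field K] [Fintype K] [Algebra (ZMod p) K] {n : ℕ}

lemma ip_add_left (x x' y : Fin n → K) : ip p (x + x') y = ip p x y + ip p x' y := by
  unfold ip; rw [← map_add]; congr 1
  simp [add_mul, Finset.sum_add_distrib]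

lemma ip_neg_left (x y : Fin n → K) : ip p (-x) y = - ip p x y := by
  unfold ip; rw [← map_neg]; congr 1; simp [neg_mul]

lemma ip_zero_left (x : Fin n → K) : ip p 0 x = 0 := by simp [ip]

lemma symp_add_left (v v' w : (Fin n → K) × (Fin n → K)) :
    symp p (v + v') w = symp p v w + symp p v' w := by
  simp only [symp, Prod.fst_add, Prod.snd_add, ip_add_left]; ring

lemma symp_neg_left (v w : (Fin n → K) × (Fin n → K)) :
    symp p (-v) w = - symp p v w := by
  simp only [symp, Prod.fst_neg, Prod.snd_neg, ip_neg_left]; ring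

lemma symp_zero_left (w : (Fin n → K) × (Fin n → K)) : symp p 0 w = 0 := by
  simp [symp, ip_zero_left]

lemma symp_sub_left (v v' w : (Fin n → K) × (Fin n → K)) :
    symp p (v - v') w = symp p v w - symp p v' w := by
  rw [sub_eq_add_neg, symp_add_left, symp_neg_left]; ring

lemma symp_add_right (v w w' : (Fin n → K) × (Fin n → K)) :
    symp p v (w + w') = symp p v w + symp p v w' := by
  simp only [symp, Prod.fst_add, Prod.snd_add, ip_add_right]; ring

lemma symp_neg_right (v w : (Fin n → K) × (Fin n → K)) :
    symp p v (-w) = - symp p v w := by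
  simp only [symp, Prod.fst_neg, Prod.snd_neg, ip_neg_right]; ring

lemma symp_zero_right (v : (Fin n → K) × (Fin n → K)) : symp p v 0 = 0 := by
  simp [symp, ip_zero_right]

lemma symp_sub_right (v w w' : (Fin n → K) × (Fin n → K)) :
    symp p v (w - w') = symp p v w - symp p v w' := by
  rw [sub_eq_add_neg, symp_add_right, symp_neg_right]; ring

variable [Fact p.Prime]

lemma exists_ip_ne {x : Fin n → K} (hx : x ≠ 0) : ∃ y, ip p x y ≠ 0 := by
  haveI : FiniteDimensional (ZMod p) K := Module.Finite.of_finite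
  obtain ⟨a, ha⟩ := DFunLike.ne_iff.mp (Algebra.trace_ne_zero (ZMod p) K)
  obtain ⟨s, hs⟩ : ∃ s, x s ≠ 0 := by
    by_contra h; push_neg at h; exact hx (funext h)
  classical
  refine ⟨Function.update 0 s ((x s)⁻¹ * a), ?_⟩
  have : ∑ t, x t * Function.update (0 : Fin n → K) s ((x s)⁻¹ * a) t = a := by
    rw [Finset.sum_eq_single s]
    · rw [Function.update_self, ← mul_assoc, mul_inv_cancel₀ hs, one_mul]
    · intro t _ ht; rw [Function.update_of_ne ht]; simp
    · intro h; exact absurd (Finset.mem_univ s) h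
  rw [ip, this]; simpa using ha

lemma symp_nondeg {v : (Fin n → K) × (Fin n → K)} (hv : v ≠ 0) :
    ∃ w, symp p v w ≠ 0 := by
  by_cases h1 : v.1 ≠ 0
  · obtain ⟨y, hy⟩ := exists_ip_ne p h1
    refine ⟨(0, y), ?_⟩
    simpa [symp, ip, neg_eq_zero] using hy
  · push_neg at h1
    have h2 : v.2 ≠ 0 := by
      intro h2; exact hv (Prod.ext h1 h2)
    obtain ⟨y, hy⟩ := exists_ip_ne p h2
    refine ⟨(y, 0), ?_⟩
    simpa [symp, ip] using hy
end ipLemmas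

section WtLemmas
variable (p : ℕ) [Fact p.Prime] {K : Type*} [Field K] [Fintype K] [DecidableEq K]
  [Algebra (ZMod p) K] {n : ℕ}

lemma Wt_def (a b : Fin n → K) :
    Wt p a b = Matrix.of (fun j k => if j = k + a then chi p (ip p b k) else 0) := rfl

lemma Wt_zero : Wt p (0 : Fin n → K) 0 = 1 := by
  ext j k
  rw [Wt_def, Matrix.of_apply, Matrix.one_apply, ip_zero_left, chi_zero, add_zero]

lemma Wt_mul (a b a' b' : Fin n → K) :
    Wt p a b * Wt p a' b' = chi p (ip p b a') • Wt p (a + a') (b + b') := by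
  ext j k
  rw [Matrix.mul_apply, Finset.sum_eq_single (k + a')]
  · simp only [Wt_def, Matrix.of_apply, Matrix.smul_apply, smul_eq_mul]
    by_cases h : j = k + (a + a')
    · have h1 : j = k + a' + a := by rw [h, add_assoc, add_comm a' a]
      rw [if_pos h1, if_true, if_pos h,
        ip_add_right, ip_add_left, chi_add, chi_add]
      ring
    · rw [if_neg (fun hc => h (by rw [hc, add_assoc, add_comm a' a])), if_neg h,
        zero_mul, mul_zero]
  · intro m _ hm
    simp only [Wt_def, Matrix.of_apply]
    rw [if_neg hm, mul_zero]
  · intro habs; exact absurd (Finset.mem_univ _) habs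

lemma Wt_conjT (a b : Fin n → K) :
    (Wt p a b).conjTranspose = chi p (ip p b a) • Wt p (-a) (-b) := by
  ext j k
  simp only [Matrix.conjTranspose_apply, Wt_def, Matrix.of_apply, Matrix.smul_apply,
    smul_eq_mul]
  by_cases h : k = j + a
  · rw [if_pos h, if_pos (by rw [h, add_neg_cancel_right]), Complex.star_def, conj_chi,
      ip_neg_left, h, ip_add_right, ← chi_add]
    congr 1
    ring
  · rw [if_neg h, if_neg (fun hc => h (by rw [hc, neg_add_cancel_right])), star_zero,
      mul_zero]

lemma Wtv_neg {v : (Fin n → K) × (Fin n → K)} : Wtv p (-v) = Wt p (-v.1) (-v.2) := by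
  show Wt p (-v).1 (-v).2 = _
  rw [Prod.fst_neg, Prod.snd_neg]

lemma Wtv_mul_neg (v : (Fin n → K) × (Fin n → K)) :
    Wtv p v * Wtv p (-v) = chi p (-(ip p v.2 v.1)) • 1 := by
  rw [Wtv_neg]
  show Wt p v.1 v.2 * _ = _
  rw [Wt_mul, add_neg_cancel, add_neg_cancel, Wt_zero, ip_neg_right]

lemma Wtv_conjT (v : (Fin n → K) × (Fin n → K)) :
    (Wtv p v).conjTranspose = chi p (ip p v.2 v.1) • Wtv p (-v) := by
  rw [Wtv_neg]
  show (Wt p v.1 v.2).conjTranspose = _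
  rw [Wt_conjT]
end WtLemmas

section sumTools

lemma smul_one_inj {n : ℕ} {K : Type*} [Field K] [Fintype K] [DecidableEq K] {s t : ℂ}
    (h : s • (1 : Matrix (Fin n → K) (Fin n → K) ℂ) = t • 1) : s = t := by
  have h2 := congrFun (congrFun h (fun _ => 0)) (fun _ => 0)
  simpa [Matrix.smul_apply, Matrix.one_apply] using h2

lemma sum_smul_sum_smul {ι κ A : Type*} [Fintype ι] [Fintype κ] [AddCommMonoid A]
    [Module ℂ A] (a : ι → ℂ) (b : ι → κ → ℂ) (M : κ → A) :
    ∑ i, a i • ∑ j, b i j • M j = ∑ j, (∑ i, a i * b i j) • M j := by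
  simp_rw [Finset.smul_sum, smul_smul]
  rw [Finset.sum_comm]
  simp_rw [← Finset.sum_smul]

lemma sum_smul_mul_sum_smul {ι κ m : Type*} [Fintype ι] [Fintype κ] [Fintype m]
    [DecidableEq m] (a : ι → ℂ) (b : κ → ℂ) (A : ι → Matrix m m ℂ) (B : κ → Matrix m m ℂ) :
    (∑ i, a i • A i) * (∑ j, b j • B j) = ∑ i, ∑ j, (a i * b j) • (A i * B j) := by
  rw [Finset.sum_mul]
  refine Finset.sum_congr rfl (fun i _ => ?_)
  rw [Finset.mul_sum]
  refine Finset.sum_congr rfl (fun j _ => ?_)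
  rw [smul_mul_assoc, mul_smul_comm, smul_smul]
end sumTools

section charSums
variable (p : ℕ) [Fact p.Prime] {K : Type*} [Field K] [Fintype K]
  [Algebra (ZMod p) K] {n : ℕ} (V : Submodule K ((Fin n → K) × (Fin n → K)))

lemma mem_sympPerp {w : (Fin n → K) × (Fin n → K)} :
    w ∈ sympPerp p V ↔ ∀ v ∈ V, symp p v w = 0 := Iff.rfl

lemma Vsum_mem [Fintype V] {w : (Fin n → K) × (Fin n → K)} (hw : w ∈ sympPerp p V) :
    ∑ v : V, chi p (symp p v.1 w) = (Fintype.card V : ℂ) := by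
  calc ∑ v : V, chi p (symp p v.1 w) = ∑ _v : V, (1 : ℂ) :=
        Finset.sum_congr rfl (fun v _ => by rw [hw v.1 v.2, chi_zero])
    _ = _ := by simp

lemma Vsum_not [Fintype V] {w : (Fin n → K) × (Fin n → K)} (hw : w ∉ sympPerp p V) :
    ∑ v : V, chi p (symp p v.1 w) = 0 := by
  have h := char_sum p (A := V)
    ⟨⟨fun v => symp p v.1 w, by rw [ZeroMemClass.coe_zero, symp_zero_left]⟩,
      fun v v' => by dsimp only; rw [Submodule.coe_add, symp_add_left]⟩
  simp only [AddMonoidHom.coe_mk, ZeroHom.coe_mk] at h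
  rw [if_neg (fun hall => hw (fun v hv => hall ⟨v, hv⟩))] at h
  exact h

lemma Qsum_ne [Fintype (((Fin n → K) × (Fin n → K)) ⧸ sympPerp p V)]
    {z : (Fin n → K) × (Fin n → K)} (hz0 : z ≠ 0)
    (hz : ∀ h ∈ sympPerp p V, symp p z h = 0) :
    ∑ x : ((Fin n → K) × (Fin n → K)) ⧸ sympPerp p V, chi p (symp p z x.out) = 0 := by
  set φ : ((Fin n → K) × (Fin n → K)) →+ ZMod p :=
    ⟨⟨fun w => symp p z w, symp_zero_right p z⟩, fun w w' => symp_add_right p z w w'⟩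
    with hφ
  set ψ := QuotientAddGroup.lift (sympPerp p V) φ hz with hψdef
  have hψ : ∀ x, symp p z x.out = ψ x := by
    intro x
    conv_rhs => rw [← QuotientAddGroup.out_eq' x]
    rfl
  simp_rw [hψ]
  rw [char_sum p ψ, if_neg]
  intro hall
  obtain ⟨w, hw⟩ := symp_nondeg p hz0
  exact hw (hall ((w : ((Fin n → K) × (Fin n → K)) ⧸ sympPerp p V)))

lemma quot_eq_of_sub_mem {G : Type*} [AddCommGroup G] {H : AddSubgroup G}
    {x y : G ⧸ H} (h : x.out - y.out ∈ H) : x = y := by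
  rw [← QuotientAddGroup.out_eq' x, ← QuotientAddGroup.out_eq' y, QuotientAddGroup.eq]
  rw [neg_add_eq_sub]
  simpa using neg_mem h
end charSums
/-- Proposition 2, part 1, of the paper: let `V` be a self-orthogonal
`d`-dimensional subspace of `F_q^{2n}` and `c : V → ℂ` with `c 0 = 1` be such that
`W(v) := c v • W̃(v)` satisfies `W(v)W(v') = W(v+v')` on `V`.  Then there is a unique
family `(P_{[w]})` of matrices indexed by the cosets `[w] ∈ F_q^{2n}/V^{⊥J}` such that
each `P_{[w]}` is an orthogonal projection, `P_{[w]} P_{[w']} = 0` for `[w] ≠ [w']`,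
`∑_{[w]} P_{[w]} = I`, and `W(v) = ∑_{[w]} ω^{⟨v, Jw⟩} P_{[w]}` for every `v ∈ V`
(the exponent is evaluated on the representative `x.out` of a coset `x`; for `v ∈ V`
it depends only on the coset). -/
theorem stmt_12 (p : ℕ) [Fact p.Prime] (K : Type*) [Field K] [Fintype K] [DecidableEq K]
    [Algebra (ZMod p) K] (n d : ℕ)
    (V : Submodule K ((Fin n → K) × (Fin n → K)))
    (hd : Module.finrank K V = d)
    (hV : ∀ v ∈ V, ∀ v' ∈ V, symp p v v' = 0)
    (c : ((Fin n → K) × (Fin n → K)) → ℂ) (hc0 : c 0 = 1)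
    (hmul : ∀ v ∈ V, ∀ v' ∈ V,
      (c v • Wtv p v) * (c v' • Wtv p v') = c (v + v') • Wtv p (v + v')) :
    ∃! P : (((Fin n → K) × (Fin n → K)) ⧸ sympPerp p V) →
        Matrix (Fin n → K) (Fin n → K) ℂ,
      (∀ x, (P x).conjTranspose = P x ∧ P x * P x = P x) ∧
      (∀ x y, x ≠ y → P x * P y = 0) ∧
      (∑ᶠ x, P x) = 1 ∧
      (∀ v ∈ V, c v • Wtv p v = ∑ᶠ x, omg p ^ (symp p v x.out).val • P x) := by
  classical
  haveI : NeZero p := ⟨(Fact.out : p.Prime).ne_zero⟩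
  letI : Fintype (((Fin n → K) × (Fin n → K)) ⧸ sympPerp p V) := Fintype.ofFinite _
  letI : Fintype V := Fintype.ofFinite _
  haveI : Nonempty V := ⟨⟨0, V.zero_mem⟩⟩
  haveI : Nonempty (((Fin n → K) × (Fin n → K)) ⧸ sympPerp p V) :=
    ⟨((0 : (Fin n → K) × (Fin n → K)) : _)⟩
  obtain ⟨W, hWap⟩ : ∃ W' : ((Fin n → K) × (Fin n → K)) →
      Matrix (Fin n → K) (Fin n → K) ℂ, ∀ u, W' u = c u • Wtv p u :=
    ⟨_, fun u => rfl⟩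
  have hmulW : ∀ v ∈ V, ∀ v' ∈ V, W v * W v' = W (v + v') := by
    intro v hv v' hv'
    rw [hWap, hWap, hWap]
    exact hmul v hv v' hv'
  have hW0 : W 0 = 1 := by
    rw [hWap, hc0, one_smul]
    exact Wt_zero p
  have hN : ((Fintype.card V : ℂ)) ≠ 0 := Nat.cast_ne_zero.mpr Fintype.card_ne_zero
  -- basic facts about the scalars c
  have hccneg : ∀ v ∈ V, c v * c (-v) = chi p (ip p v.2 v.1) := by
    intro v hv
    have h := hmulW v hv (-v) (V.neg_mem hv)
    rw [add_neg_cancel, hW0] at h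
    have hprod : W v * W (-v) = ((c v * c (-v)) * chi p (-(ip p v.2 v.1))) • 1 := by
      rw [hWap v, hWap (-v), smul_mul_assoc, mul_smul_comm, Wtv_mul_neg, smul_smul,
        smul_smul]
    have h2 : ((c v * c (-v)) * chi p (-(ip p v.2 v.1))) •
        (1 : Matrix (Fin n → K) (Fin n → K) ℂ) = (1 : ℂ) • 1 := by
      rw [one_smul, ← hprod]; exact h
    have h3 := smul_one_inj h2
    have h4 := chi_mul_neg p (ip p v.2 v.1)
    linear_combination chi p (ip p v.2 v.1) * h3 - (c v * c (-v)) * h4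
  have hconjW : ∀ v, (W v).conjTranspose =
      (star (c v) * chi p (ip p v.2 v.1)) • Wtv p (-v) := by
    intro v
    rw [hWap v, Matrix.conjTranspose_smul, Wtv_conjT, smul_smul]
  have hWWconj : ∀ v, W v * (W v).conjTranspose = (c v * star (c v)) • 1 := by
    intro v
    rw [hconjW, hWap v, smul_mul_assoc, mul_smul_comm, smul_smul, Wtv_mul_neg,
      smul_smul]
    congr 1
    have h4 := chi_mul_neg p (ip p v.2 v.1)
    linear_combination (c v * star (c v)) * h4
  have hconjWW : ∀ v, (W v).conjTranspose * W v = (c v * star (c v)) • 1 := by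
    intro v
    rw [hconjW, hWap v, smul_mul_assoc, mul_smul_comm, smul_smul]
    have hm : Wtv p (-v) * Wtv p v = chi p (-(ip p v.2 v.1)) • 1 := by
      have h5 := Wtv_mul_neg p (-v)
      rw [neg_neg] at h5
      rw [h5]
      congr 2
      rw [Prod.snd_neg, Prod.fst_neg, ip_neg_left, ip_neg_right, neg_neg]
    rw [hm, smul_smul]
    congr 1
    have h4 := chi_mul_neg p (ip p v.2 v.1)
    linear_combination (c v * star (c v)) * h4
  have hcnorm : ∀ v ∈ V, c v * star (c v) = 1 := by
    intro v hv
    have hpsmul : (p : ℕ) • v = (0 : (Fin n → K) × (Fin n → K)) := by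
      have h1 : ((p : ℕ) : K) = 0 := by
        have h2 := map_natCast (algebraMap (ZMod p) K) p
        rw [ZMod.natCast_self, map_zero] at h2
        exact h2.symm
      rw [← Nat.cast_smul_eq_nsmul K p v, h1, zero_smul]
    have hWpow : ∀ k : ℕ, W v ^ k = W (k • v) := by
      intro k
      induction k with
      | zero => rw [pow_zero, zero_smul, hW0]
      | succ k ih =>
        rw [pow_succ, ih, hmulW (k • v) (nsmul_mem hv k) v hv, succ_nsmul]
    have hWp : W v ^ p = 1 := by rw [hWpow p, hpsmul, hW0]
    have hcomm : Commute (W v) ((W v).conjTranspose) := by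
      unfold Commute SemiconjBy
      rw [hWWconj, hconjWW]
    have hpow2 := hcomm.mul_pow p
    rw [hWp, ← Matrix.conjTranspose_pow, hWp, Matrix.conjTranspose_one, one_mul,
      hWWconj, smul_pow, one_pow] at hpow2
    have h1m : (c v * star (c v)) ^ p • (1 : Matrix (Fin n → K) (Fin n → K) ℂ)
        = (1 : ℂ) • 1 := by rw [one_smul]; exact hpow2
    have hsc := smul_one_inj h1m
    have hsq : c v * star (c v) = (Complex.normSq (c v) : ℂ) := by
      rw [Complex.star_def, Complex.mul_conj]
    rw [hsq] at hsc ⊢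
    norm_cast at hsc ⊢
    have ht0 := Complex.normSq_nonneg (c v)
    rcases lt_trichotomy (Complex.normSq (c v)) 1 with h | h | h
    · have hlt := pow_lt_one₀ ht0 h (Fact.out : p.Prime).ne_zero
      rw [hsc] at hlt; exact absurd hlt (lt_irrefl 1)
    · exact h
    · have hlt := one_lt_pow₀ h (Fact.out : p.Prime).ne_zero
      rw [hsc] at hlt; exact absurd hlt (lt_irrefl 1)
  have hWstar : ∀ v ∈ V, (W v).conjTranspose = W (-v) := by
    intro v hv
    rw [hconjW, hWap (-v)]
    congr 1
    have h1 := hccneg v hv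
    have h2 := hcnorm v hv
    have hcne : c v ≠ 0 := by
      intro h; rw [h, zero_mul] at h2; exact zero_ne_one h2
    apply mul_left_cancel₀ hcne
    calc c v * (star (c v) * chi p (ip p v.2 v.1))
        = (c v * star (c v)) * chi p (ip p v.2 v.1) := by ring
      _ = chi p (ip p v.2 v.1) := by rw [h2, one_mul]
      _ = c v * c (-v) := h1.symm
  -- the projections
  obtain ⟨P, hPap⟩ : ∃ P' : (((Fin n → K) × (Fin n → K)) ⧸ sympPerp p V) →
      Matrix (Fin n → K) (Fin n → K) ℂ, ∀ x, P' x =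
      (Fintype.card V : ℂ)⁻¹ • ∑ v : V, chi p (-symp p v.1 x.out) • W v.1 :=
    ⟨_, fun x => rfl⟩
  have key : ∀ x y, P x * P y =
      ((Fintype.card V : ℂ)⁻¹ * (Fintype.card V : ℂ)⁻¹) •
        ∑ u : V, (chi p (-symp p u.1 y.out) *
          ∑ v : V, chi p (symp p v.1 (y.out - x.out))) • W u.1 := by
    intro x y
    rw [hPap x, hPap y, smul_mul_assoc, mul_smul_comm, smul_smul,
      sum_smul_mul_sum_smul]
    congr 1
    calc ∑ v : V, ∑ u' : V,
          (chi p (-symp p v.1 x.out) * chi p (-symp p u'.1 y.out)) • (W v.1 * W u'.1)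
        = ∑ v : V, ∑ u : V,
          (chi p (-symp p u.1 y.out) * chi p (symp p v.1 (y.out - x.out))) • W u.1 := by
          refine Finset.sum_congr rfl (fun v _ => ?_)
          rw [← Equiv.sum_comp (Equiv.addLeft v) (fun u : V =>
            (chi p (-symp p u.1 y.out) * chi p (symp p v.1 (y.out - x.out))) • W u.1)]
          refine Finset.sum_congr rfl (fun u' _ => ?_)
          simp only [Equiv.coe_addLeft]
          rw [hmulW v.1 v.2 u'.1 u'.2]
          have hco : ((v + u' : V) : (Fin n → K) × (Fin n → K)) = v.1 + u'.1 := rfl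
          rw [hco]
          congr 1
          rw [symp_add_left, symp_sub_right, ← chi_add, ← chi_add]
          congr 1
          ring
      _ = _ := by
          rw [Finset.sum_comm]
          refine Finset.sum_congr rfl (fun u _ => ?_)
          rw [← Finset.sum_smul, ← Finset.mul_sum]
  have hPidem : ∀ x, P x * P x = P x := by
    intro x
    rw [key x x, sub_self,
      Vsum_mem p V (AddSubgroup.zero_mem (sympPerp p V)), hPap x]
    have hre : ∑ u : V, (chi p (-symp p u.1 x.out) * (Fintype.card V : ℂ)) • W u.1
        = (Fintype.card V : ℂ) • ∑ u : V, chi p (-symp p u.1 x.out) • W u.1 := by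
      rw [Finset.smul_sum]
      refine Finset.sum_congr rfl (fun u _ => ?_)
      rw [smul_smul, mul_comm]
    rw [hre, smul_smul]
    congr 1
    field_simp
  have hPorth : ∀ x y, x ≠ y → P x * P y = 0 := by
    intro x y hxy
    rw [key x y]
    have hnm : y.out - x.out ∉ sympPerp p V :=
      fun hmem => hxy (quot_eq_of_sub_mem hmem).symm
    rw [Vsum_not p V hnm]
    simp
  have hPherm : ∀ x, (P x).conjTranspose = P x := by
    intro x
    rw [hPap x, Matrix.conjTranspose_smul, Matrix.conjTranspose_sum]
    simp_rw [Matrix.conjTranspose_smul]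
    have hsN : star ((Fintype.card V : ℂ)⁻¹) = (Fintype.card V : ℂ)⁻¹ := by
      rw [star_inv₀, star_natCast]
    rw [hsN]
    congr 1
    calc ∑ v : V, star (chi p (-symp p v.1 x.out)) • (W v.1).conjTranspose
        = ∑ v : V, (fun v : V => chi p (-symp p v.1 x.out) • W v.1) ((Equiv.neg V) v) := by
          refine Finset.sum_congr rfl (fun v _ => ?_)
          simp only [Equiv.neg_apply]
          rw [star_chi, neg_neg, hWstar v.1 v.2]
          have hco : ((-v : V) : (Fin n → K) × (Fin n → K)) = -(v.1) := rfl
          rw [hco, symp_neg_left, neg_neg]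
      _ = _ := Equiv.sum_comp (Equiv.neg V)
            (fun v : V => chi p (-symp p v.1 x.out) • W v.1)
  have hPsum' : ∑ x, P x =
      ((Fintype.card V : ℂ)⁻¹ *
        (Fintype.card (((Fin n → K) × (Fin n → K)) ⧸ sympPerp p V) : ℂ)) • 1 := by
    simp_rw [hPap]
    rw [← Finset.smul_sum, mul_smul]
    congr 1
    have hswap : ∑ x : (((Fin n → K) × (Fin n → K)) ⧸ sympPerp p V),
          ∑ v : V, chi p (-symp p v.1 x.out) • W v.1
        = ∑ v : V, (∑ x : (((Fin n → K) × (Fin n → K)) ⧸ sympPerp p V),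
            chi p (symp p (-(v.1)) x.out)) • W v.1 := by
      rw [Finset.sum_comm]
      refine Finset.sum_congr rfl (fun v _ => ?_)
      rw [Finset.sum_smul]
      refine Finset.sum_congr rfl (fun x _ => ?_)
      rw [symp_neg_left]
    rw [hswap, Finset.sum_eq_single (0 : V)]
    · have hz : ∀ x : (((Fin n → K) × (Fin n → K)) ⧸ sympPerp p V),
          symp p (-(((0 : V) : (Fin n → K) × (Fin n → K)))) x.out = 0 := by
        intro x
        rw [ZeroMemClass.coe_zero, neg_zero, symp_zero_left]
      simp only [hz, chi_zero]
      rw [Finset.sum_const, Finset.card_univ, nsmul_eq_mul, mul_one]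
      have hW00 : W ((0 : V) : (Fin n → K) × (Fin n → K)) = 1 := by
        rw [ZeroMemClass.coe_zero, hW0]
      rw [hW00]
    · intro v _ hv0
      have hz0 : -((v : (Fin n → K) × (Fin n → K))) ≠ 0 := by
        simp only [neg_ne_zero]
        intro h; exact hv0 (Subtype.ext h)
      have hz : ∀ h ∈ sympPerp p V, symp p (-(v.1)) h = 0 := by
        intro h hh
        rw [symp_neg_left, hh v.1 v.2, neg_zero]
      rw [Qsum_ne p V hz0 hz, zero_smul]
    · intro h; exact absurd (Finset.mem_univ _) h
  have hmu : (Fintype.card V : ℂ)⁻¹ *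
      (Fintype.card (((Fin n → K) × (Fin n → K)) ⧸ sympPerp p V) : ℂ) = 1 := by
    have hss : (∑ x, P x) * (∑ x, P x) = ∑ x, P x := by
      rw [Finset.sum_mul]
      refine Finset.sum_congr rfl (fun x _ => ?_)
      rw [Finset.mul_sum, Finset.sum_eq_single x]
      · exact hPidem x
      · intro y _ hyx; exact hPorth x y (fun h => hyx h.symm)
      · intro h; exact absurd (Finset.mem_univ _) h
    rw [hPsum', smul_mul_assoc, mul_smul_comm, smul_smul, one_mul] at hss
    have hmm := smul_one_inj hss
    have hQne : (Fintype.card (((Fin n → K) × (Fin n → K)) ⧸ sympPerp p V) : ℂ) ≠ 0 :=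
      Nat.cast_ne_zero.mpr Fintype.card_ne_zero
    have hmune : (Fintype.card V : ℂ)⁻¹ *
        (Fintype.card (((Fin n → K) × (Fin n → K)) ⧸ sympPerp p V) : ℂ) ≠ 0 :=
      mul_ne_zero (inv_ne_zero hN) hQne
    exact mul_left_cancel₀ hmune (by rw [mul_one]; exact hmm)
  have hPsum : ∑ x, P x = 1 := by rw [hPsum', hmu, one_smul]
  have hWP : ∀ v, ∀ hv : v ∈ V, W v = ∑ x, chi p (symp p v x.out) • P x := by
    intro v hv
    simp_rw [hPap]
    have h1 : ∀ x : (((Fin n → K) × (Fin n → K)) ⧸ sympPerp p V),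
        chi p (symp p v x.out) •
          ((Fintype.card V : ℂ)⁻¹ • ∑ u : V, chi p (-symp p u.1 x.out) • W u.1)
        = (Fintype.card V : ℂ)⁻¹ •
          (chi p (symp p v x.out) • ∑ u : V, chi p (-symp p u.1 x.out) • W u.1) :=
      fun x => smul_comm _ _ _
    simp_rw [h1]
    rw [← Finset.smul_sum, sum_smul_sum_smul]
    have h2 : ∀ u : V, (∑ x : (((Fin n → K) × (Fin n → K)) ⧸ sympPerp p V),
          chi p (symp p v x.out) * chi p (-symp p u.1 x.out))
        = ∑ x : (((Fin n → K) × (Fin n → K)) ⧸ sympPerp p V),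
            chi p (symp p (v - u.1) x.out) := by
      intro u
      refine Finset.sum_congr rfl (fun x _ => ?_)
      rw [symp_sub_left, ← chi_add]
      congr 1
      ring
    simp_rw [h2]
    rw [Finset.sum_eq_single (⟨v, hv⟩ : V)]
    · have hz : ∀ x : (((Fin n → K) × (Fin n → K)) ⧸ sympPerp p V),
          symp p (v - ((⟨v, hv⟩ : V) : (Fin n → K) × (Fin n → K))) x.out = 0 := by
        intro x
        rw [show ((⟨v, hv⟩ : V) : (Fin n → K) × (Fin n → K)) = v from rfl, sub_self,
          symp_zero_left]
      simp only [hz, chi_zero]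
      rw [Finset.sum_const, Finset.card_univ, nsmul_eq_mul, mul_one, smul_smul, hmu,
        one_smul]
    · intro u _ hu
      have hz0 : v - (u : (Fin n → K) × (Fin n → K)) ≠ 0 :=
        sub_ne_zero.mpr (fun h => hu (Subtype.ext h.symm))
      have hz : ∀ h ∈ sympPerp p V, symp p (v - u.1) h = 0 := by
        intro h hh
        rw [symp_sub_left, hh v hv, hh u.1 u.2, sub_zero]
      rw [Qsum_ne p V hz0 hz, zero_smul]
    · intro h; exact absurd (Finset.mem_univ _) h
  refine ⟨P, ⟨fun x => ⟨hPherm x, hPidem x⟩, hPorth, ?_, ?_⟩, ?_⟩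
  · rw [finsum_eq_sum_of_fintype]; exact hPsum
  · intro v hv
    rw [finsum_eq_sum_of_fintype]
    simp_rw [chi_eq]
    rw [← hWap v]
    exact hWP v hv
  · intro F hF
    funext y
    have h4 := hF.2.2.2
    have h4' : ∀ v : V, W v.1 = ∑ x, chi p (symp p v.1 x.out) • F x := by
      intro v
      have h5 := h4 v.1 v.2
      rw [finsum_eq_sum_of_fintype] at h5
      simp_rw [chi_eq] at h5
      rw [hWap]
      exact h5
    have hcalc : (Fintype.card V : ℂ)⁻¹ •
        ∑ v : V, chi p (-symp p v.1 y.out) • W v.1 = F y := by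
      calc (Fintype.card V : ℂ)⁻¹ • ∑ v : V, chi p (-symp p v.1 y.out) • W v.1
          = (Fintype.card V : ℂ)⁻¹ • ∑ v : V, chi p (-symp p v.1 y.out) •
              ∑ x, chi p (symp p v.1 x.out) • F x := by
            congr 1
            exact Finset.sum_congr rfl (fun v _ => by rw [h4' v])
        _ = (Fintype.card V : ℂ)⁻¹ • ∑ x : (((Fin n → K) × (Fin n → K)) ⧸ sympPerp p V),
              (∑ v : V, chi p (-symp p v.1 y.out) * chi p (symp p v.1 x.out)) • F x := by
            rw [sum_smul_sum_smul]
        _ = (Fintype.card V : ℂ)⁻¹ • ∑ x : (((Fin n → K) × (Fin n → K)) ⧸ sympPerp p V),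
              (∑ v : V, chi p (symp p v.1 (x.out - y.out))) • F x := by
            congr 1
            refine Finset.sum_congr rfl (fun x _ => ?_)
            congr 1
            refine Finset.sum_congr rfl (fun v _ => ?_)
            rw [symp_sub_right, ← chi_add]
            congr 1
            ring
        _ = F y := by
            rw [Finset.sum_eq_single y]
            · rw [sub_self, Vsum_mem p V (AddSubgroup.zero_mem (sympPerp p V)),
                smul_smul, inv_mul_cancel₀ hN, one_smul]
            · intro x _ hxy
              have hnm : x.out - y.out ∉ sympPerp p V :=
                fun hmem => hxy (quot_eq_of_sub_mem hmem)
              rw [Vsum_not p V hnm, zero_smul]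
            · intro h; exact absurd (Finset.mem_univ _) h
    rw [hPap y]
    exact hcalc.symm
end
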